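/- arXiv:1207.0043 — 4 statements merged into one kernel-verified Lean document; each statement's English description precedes it below -/
import Mathlib

section
/- If the 3-CNF formula φ is unsatisfiable, then every stable in-arborescence rooted at r in the network G(φ,L) contains none of the padding nodes d₁,…,d_L; in particular, every stable in-arborescence rooted at r has at most 4N+5M+2 nodes. -/
/-- `p` is a directed path from `v` to `s` in the digraph with arc relation `A`:
a nonempty list of pairwise distinct vertices starting at `v`, ending at `s`,
in which every consecutive pair is an arc. -/
def IsPath {V : Type} (A : V → V → Prop) (p : List V) (v s : V) : Prop :=
  p.head? = some v ∧ p.getLast? = some s ∧ p.Chain' A ∧ p.Nodup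

/-- The arc relation of an arc set `T`. -/
def arcRel {V : Type} (T : Set (V × V)) : V → V → Prop := fun a b => (a, b) ∈ T

/-- The vertex set of the subgraph with arc set `T`, together with the root `r`. -/
def vertsOf {V : Type} (r : V) (T : Set (V × V)) : Set V :=
  insert r {v | ∃ e ∈ T, v = e.1 ∨ v = e.2}

/-- `T` is an in-arborescence rooted at `r`: every node of `V(T)` has a unique
directed path in `T` to `r`. -/
def IsInArb {V : Type} (r : V) (T : Set (V × V)) : Prop :=
  ∀ v ∈ vertsOf r T, ∃! p : List V, IsPath (arcRel T) p v r

/-- `w` is valid for `u` w.r.t. the in-arborescence `T`: `(u,w)` is an arc of the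
network, `w ∈ V(T)`, and the path in `T` from `w` to `r` contains no node of `D u`. -/
def ValidFor {V : Type} (adj : V → V → Prop) (D : V → Set V) (r : V) (T : Set (V × V))
    (u w : V) : Prop :=
  adj u w ∧ ∃ p, IsPath (arcRel T) p w r ∧ ∀ x ∈ D u, x ∉ p

/-- The in-arborescence `T` is stable: for every arc `(u,w)` of `T`, `w` is valid for
`u` and `u` prefers `w` to every other node that is valid for `u`. -/
def StableArb {V : Type} (adj : V → V → Prop) (pref : V → V → V → Prop) (D : V → Set V)
    (r : V) (T : Set (V × V)) : Prop :=
  ∀ e ∈ T, ValidFor adj D r T e.1 e.2 ∧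
    ∀ w', ValidFor adj D r T e.1 w' → w' ≠ e.2 → pref e.1 e.2 w'

/-- The nodes of the reduction graph `G(φ,L)`: the sink `r`; dummy/padding nodes
`d₀,…,d_L`; Variable-Gadget nodes `aᵢ, u^Tᵢ, u^Fᵢ, bᵢ`; Clause-Gadget nodes
`sⱼ, q_{z,j}, tⱼ`. -/
inductive RVert (N M L : ℕ) : Type where
  | sink : RVert N M L
  | dummy : Fin (L + 1) → RVert N M L
  | a : Fin N → RVert N M L
  | uT : Fin N → RVert N M L
  | uF : Fin N → RVert N M L
  | b : Fin N → RVert N M L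
  | s : Fin M → RVert N M L
  | q : Fin 3 → Fin M → RVert N M L
  | t : Fin M → RVert N M L
  deriving DecidableEq, Fintype

/-- The out-neighbours of each node of `G(φ,L)`, listed in order of preference
(most preferred first). -/
def outList (N M L : ℕ) : RVert N M L → List (RVert N M L)
  | .sink => []
  | .dummy i =>
      if i = (0 : Fin (L + 1)) then [.sink]
      else if h : 0 < M then [.s ⟨M - 1, by omega⟩] else []
  | .a i => [.uT i, .uF i]
  | .uT i => [.a i, .b i]
  | .uF i => [.a i, .b i]
  | .b i =>
      if h : i.val = 0 then [.sink]
      else [.a ⟨i.val - 1, by have := i.isLt; omega⟩]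
  | .s j => [.q 0 j, .q 1 j, .q 2 j]
  | .q _ j => [.t j, .dummy 0]
  | .t j =>
      if h : j.val = 0 then (if h2 : 0 < N then [.a ⟨N - 1, by omega⟩] else [])
      else [.s ⟨j.val - 1, by have := j.isLt; omega⟩]

/-- The adjacency relation of `G(φ,L)`. -/
def adjR {N M L : ℕ} (v w : RVert N M L) : Prop := w ∈ outList N M L v

/-- The preference relation of `G(φ,L)`: `v` prefers `w` to `w'` iff `w` occurs
earlier than `w'` in `v`'s preference list. -/
def prefR {N M L : ℕ} (v w w' : RVert N M L) : Prop :=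
  w ∈ outList N M L v ∧ w' ∈ outList N M L v ∧
    (outList N M L v).idxOf w < (outList N M L v).idxOf w'

/-- The filtering lists of `G(φ,L)`, where `C j z = (i, pol)` means the `z`-th literal
of clause `Cⱼ` involves variable `xᵢ` with polarity `pol` (`true` = positive). -/
def filtR {N M L : ℕ} (C : Fin M → Fin 3 → Fin N × Bool) : RVert N M L → Set (RVert N M L)
  | .sink => ∅
  | .dummy _ => {.dummy 0}
  | .a i => {.a i}
  | .uT i => {.uT i}
  | .uF i => {.uF i}
  | .b i => {.b i}
  | .s j => {.s j}
  | .q z j => if (C j z).2 then {.uF (C j z).1} else {.uT (C j z).1}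
  | .t _ => {.dummy 0}

/-- The 3-CNF formula encoded by `C` is satisfiable. -/
def SatCNF {N M : ℕ} (C : Fin M → Fin 3 → Fin N × Bool) : Prop :=
  ∃ σ : Fin N → Bool, ∀ j, ∃ z, σ (C j z).1 = (C j z).2
lemma path_cons {V : Type} {R : V → V → Prop} {p : List V} {v r : V}
    (h : IsPath R p v r) (hvr : v ≠ r) :
    ∃ w rest, p = v :: w :: rest ∧ R v w ∧ IsPath R (w :: rest) w r := by
  obtain ⟨h1, h2, h3, h4⟩ := h
  match p with
  | [] => simp at h1
  | [x] =>
    simp at h1 h2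
    exact absurd (h1.symm.trans h2) hvr
  | x :: w :: rest =>
    simp only [List.head?_cons, Option.some.injEq] at h1
    subst h1
    simp only [List.Chain', List.isChain_cons_cons] at h3
    rw [List.getLast?_cons_cons] at h2
    exact ⟨w, rest, rfl, h3.1, rfl, h2, h3.2, (List.nodup_cons.mp h4).2⟩

lemma dummy_mem_outList {N M L : ℕ} {i : Fin (L+1)} {v : RVert N M L}
    (h : RVert.dummy i ∈ outList N M L v) : i = 0 := by
  cases v with
  | sink => simp [outList] at h
  | dummy i' =>
    simp only [outList] at h
    split at h
    · simp at h
    · split at h <;> simp at h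
  | a i' => simp [outList] at h
  | uT i' => simp [outList] at h
  | uF i' => simp [outList] at h
  | b i' => simp only [outList] at h; split at h <;> simp at h
  | s j => simp [outList] at h
  | q z j => simp [outList] at h; exact h
  | t j =>
    simp only [outList] at h
    split at h
    · split at h <;> simp at h
    · simp at h
lemma varDescent {N M L : ℕ} {T : Set (RVert N M L × RVert N M L)}
    (hsub : ∀ e ∈ T, adjR e.1 e.2) :
    ∀ (n : ℕ) (p : List (RVert N M L)) (i : Fin N), p.length ≤ n →
    IsPath (arcRel T) p (.a i) .sink →
    ∀ k : Fin N, k ≤ i → (RVert.uT k ∈ p ∨ RVert.uF k ∈ p) := by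
  intro n
  induction n with
  | zero =>
    intro p i hlen hp
    obtain ⟨h1, -⟩ := hp
    cases p <;> simp at h1 hlen
  | succ n ih =>
    intro p i hlen hp k hk
    have hnd := hp.2.2.2
    obtain ⟨u, rest₁, hpe1, harc1, hp1⟩ := path_cons hp (by simp)
    have hu : u = RVert.uT i ∨ u = RVert.uF i := by
      simpa [adjR, outList] using hsub _ harc1
    have husink : u ≠ RVert.sink := by rcases hu with h | h <;> subst h <;> simp
    obtain ⟨w, rest₂, hpe2, harc2, hp2⟩ := path_cons hp1 husink
    simp only [List.cons.injEq, true_and] at hpe2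
    subst hpe2
    have hw : w = RVert.a i ∨ w = RVert.b i := by
      rcases hu with h | h <;> subst h <;> simpa [adjR, outList] using hsub _ harc2
    rw [hpe1] at hnd
    have hwa : w ≠ RVert.a i := by
      intro h; subst h
      simp [List.nodup_cons] at hnd
    have hwb : w = RVert.b i := by tauto
    subst hwb
    have hbsink : (RVert.b i : RVert N M L) ≠ RVert.sink := by simp
    obtain ⟨w', rest₃, hpe3, harc3, hp3⟩ := path_cons hp2 hbsink
    simp only [List.cons.injEq, true_and] at hpe3
    subst hpe3
    -- case on k = i
    by_cases hki : k = i
    · subst hki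
      rcases hu with h | h <;> subst h
      · left; rw [hpe1]; simp
      · right; rw [hpe1]; simp
    · have hklt : (k : ℕ) < (i : ℕ) := by
        have h1 : (k : ℕ) ≤ (i : ℕ) := hk
        have h2 : (k : ℕ) ≠ (i : ℕ) := fun h => hki (Fin.ext h)
        omega
      have hine : (i : ℕ) ≠ 0 := by omega
      have hw' : w' = RVert.a ⟨(i : ℕ) - 1, by have := i.isLt; omega⟩ := by
        simpa [adjR, outList, hine] using hsub _ harc3
      subst hw'
      have hlen' : (RVert.a ⟨(i:ℕ)-1, by have := i.isLt; omega⟩ :: rest₃).length ≤ n := by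
        rw [hpe1] at hlen; simp at hlen ⊢; omega
      have hrec := ih _ _ hlen' hp3 k (by
        show (k : ℕ) ≤ (i : ℕ) - 1
        omega)
      rw [hpe1]
      rcases hrec with h | h
      · left; simp [h]
      · right; simp [h]
lemma clauseDescent {N M L : ℕ} (hN : 0 < N) {C : Fin M → Fin 3 → Fin N × Bool}
    {T : Set (RVert N M L × RVert N M L)}
    (hsub : ∀ e ∈ T, adjR e.1 e.2)
    (harb : IsInArb RVert.sink T)
    (hstab : StableArb adjR prefR (filtR C) RVert.sink T) :
    ∀ (n : ℕ) (p : List (RVert N M L)) (j : Fin M), p.length ≤ n →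
    IsPath (arcRel T) p (.s j) .sink → RVert.dummy 0 ∉ p →
    ∃ pv : List (RVert N M L),
      IsPath (arcRel T) pv (.a ⟨N - 1, by omega⟩) .sink ∧
      (∀ x ∈ pv, x ∈ p) ∧
      ∀ k : Fin M, k ≤ j → ∃ z : Fin 3,
        (if (C k z).2 then RVert.uF (C k z).1 else RVert.uT (C k z).1) ∉ pv := by
  intro n
  induction n with
  | zero =>
    intro p j hlen hp
    obtain ⟨h1, -⟩ := hp
    cases p <;> simp at h1 hlen
  | succ n ih =>
    intro p j hlen hp hd0
    obtain ⟨q', rest₁, hpe1, harc1, hp1⟩ := path_cons hp (by simp)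
    have hq : ∃ z : Fin 3, q' = RVert.q z j := by
      have := hsub _ harc1
      simp [adjR, outList] at this
      rcases this with h | h | h
      exacts [⟨0, h⟩, ⟨1, h⟩, ⟨2, h⟩]
    obtain ⟨z, hqz⟩ := hq
    subst hqz
    obtain ⟨w, rest₂, hpe2, harc2, hp2⟩ := path_cons hp1 (by simp)
    simp only [List.cons.injEq, true_and] at hpe2
    subst hpe2
    have hw : w = RVert.t j := by
      have := hsub _ harc2
      simp [adjR, outList] at this
      rcases this with h | h
      · exact h
      · exfalso; apply hd0; rw [hpe1, h]; simp
    subst hw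
    -- validity of arc (q z j, t j) gives the filter condition
    have hval := (hstab _ harc2).1
    obtain ⟨-, p', hp', hfilt⟩ := hval
    have hvt : (RVert.t j : RVert N M L) ∈ vertsOf RVert.sink T := by
      right; exact ⟨_, harc2, Or.inr rfl⟩
    obtain ⟨pp, -, huq⟩ := harb _ hvt
    have hpeq : p' = RVert.t j :: rest₂ := (huq p' hp').trans (huq _ hp2).symm
    have hF : (if (C j z).2 then RVert.uF (C j z).1 else RVert.uT (C j z).1)
        ∉ (RVert.t j :: rest₂) := by
      rw [← hpeq]
      apply hfilt
      by_cases hpol : (C j z).2 <;> simp [filtR, hpol]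
    -- decompose t j
    obtain ⟨w', rest₃, hpe3, harc3, hp3⟩ := path_cons hp2 (by simp)
    simp only [List.cons.injEq, true_and] at hpe3
    subst hpe3
    by_cases hj0 : (j : ℕ) = 0
    · -- base case: t j points to a (N-1)
      have hw' : w' = RVert.a ⟨N - 1, by omega⟩ := by
        simpa [adjR, outList, hj0, hN] using hsub _ harc3
      subst hw'
      refine ⟨_, hp3, ?_, ?_⟩
      · intro x hx; rw [hpe1]; simp [hx]
      · intro k hk
        have hkj : k = j := by
          apply Fin.ext
          have : (k : ℕ) ≤ (j : ℕ) := hk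
          omega
        subst hkj
        exact ⟨z, fun h => hF (by simp [h])⟩
    · -- step: t j points to s (j-1)
      have hw' : w' = RVert.s ⟨(j : ℕ) - 1, by have := j.isLt; omega⟩ := by
        simpa [adjR, outList, hj0] using hsub _ harc3
      subst hw'
      have hlen' : (RVert.s ⟨(j:ℕ)-1, by have := j.isLt; omega⟩ :: rest₃).length ≤ n := by
        rw [hpe1] at hlen; simp at hlen ⊢; omega
      have hd0' : RVert.dummy 0 ∉ (RVert.s ⟨(j:ℕ)-1, by have := j.isLt; omega⟩ :: rest₃) := by
        intro h; apply hd0; rw [hpe1]; simp [h]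
      obtain ⟨pv, hpv, hpvsub, hpvcl⟩ := ih _ _ hlen' hp3 hd0'
      refine ⟨pv, hpv, ?_, ?_⟩
      · intro x hx
        have := hpvsub x hx
        rw [hpe1]; simp [this]
      · intro k hk
        by_cases hkj : k = j
        · subst hkj
          refine ⟨z, fun h => hF ?_⟩
          have := hpvsub _ h
          simp [this]
        · apply hpvcl
          show (k : ℕ) ≤ (j : ℕ) - 1
          have h1 : (k : ℕ) ≤ (j : ℕ) := hk
          have h2 : (k : ℕ) ≠ (j : ℕ) := fun h => hkj (Fin.ext h)
          omega

/-- if the 3-CNF formula `φ` (encoded by `C`) is unsatisfiable, then every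
stable in-arborescence rooted at `r` in `G(φ,L)` contains none of the padding nodes
`d₁,…,d_L`; in particular it has at most `4N+5M+2` nodes. -/
theorem stmt5 (N M L : ℕ) (hN : 0 < N) (hM : 0 < M) (hL : 1 ≤ L)
    (C : Fin M → Fin 3 → Fin N × Bool) (hunsat : ¬ SatCNF C)
    (T : Set (RVert N M L × RVert N M L))
    (hsub : ∀ e ∈ T, adjR e.1 e.2)
    (harb : IsInArb RVert.sink T)
    (hstab : StableArb adjR prefR (filtR C) RVert.sink T) :
    (∀ i : Fin (L + 1), i ≠ 0 → RVert.dummy i ∉ vertsOf RVert.sink T) ∧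
    (vertsOf RVert.sink T).ncard ≤ 4 * N + 5 * M + 2 := by
  classical
  have hpart1 : ∀ i : Fin (L + 1), i ≠ 0 → RVert.dummy i ∉ vertsOf RVert.sink T := by
    intro i hi hmem
    rcases hmem with h | ⟨e, heT, hcase⟩
    · simp at h
    · obtain ⟨e1, e2⟩ := e
      rcases hcase with h | h
      · -- dummy i = e1 : so (dummy i, e2) ∈ T with e2 = s (M-1)
        simp only at h
        subst h
        have he2 : e2 = RVert.s ⟨M - 1, by omega⟩ := by
          simpa [adjR, outList, hi, hM] using hsub _ heT
        subst he2
        have hval := (hstab _ heT).1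
        obtain ⟨-, p, hp, hfilt⟩ := hval
        have hd0 : RVert.dummy 0 ∉ p := hfilt _ (by simp [filtR])
        obtain ⟨pv, hpv, -, hcl⟩ :=
          clauseDescent hN hsub harb hstab p.length p ⟨M - 1, by omega⟩ le_rfl hp hd0
        apply hunsat
        refine ⟨fun i' => decide (RVert.uT i' ∈ pv), fun j => ?_⟩
        obtain ⟨z, hz⟩ := hcl j (by
          show (j : ℕ) ≤ M - 1
          have := j.isLt; omega)
        refine ⟨z, ?_⟩
        have htf := varDescent hsub pv.length pv ⟨N - 1, by omega⟩ le_rfl hpv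
          (C j z).1 (by show ((C j z).1 : ℕ) ≤ N - 1; have := (C j z).1.isLt; omega)
        by_cases hpol : (C j z).2 <;> simp [hpol] at hz ⊢
        · rcases htf with h | h
          · exact h
          · exact absurd h hz
        · exact hz
      · -- dummy i = e2 : impossible, nothing points to dummy i with i ≠ 0
        simp only at h
        subst h
        exact hi (dummy_mem_outList (hsub _ heT))
  refine ⟨hpart1, ?_⟩
  set S : Finset (RVert N M L) :=
    {RVert.sink, RVert.dummy 0} ∪ Finset.univ.image RVert.a ∪ Finset.univ.image RVert.uT
    ∪ Finset.univ.image RVert.uF ∪ Finset.univ.image RVert.b ∪ Finset.univ.image RVert.s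
    ∪ Finset.univ.image (fun x : Fin 3 × Fin M => RVert.q x.1 x.2)
    ∪ Finset.univ.image RVert.t with hS
  have hsubS : vertsOf RVert.sink T ⊆ ↑S := by
    intro v hv
    cases v with
    | sink => simp [hS]
    | dummy i =>
      have : i = 0 := by
        by_contra h; exact hpart1 i h hv
      subst this; simp [hS]
    | a i => simp [hS]
    | uT i => simp [hS]
    | uF i => simp [hS]
    | b i => simp [hS]
    | s j => simp [hS]
    | q z j => simp only [hS, Finset.coe_union, Set.mem_union]; left; right
               exact Finset.mem_coe.mpr (Finset.mem_image.mpr ⟨(z, j), Finset.mem_univ _, rfl⟩)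
    | t j => simp [hS]
  have hScard : S.card ≤ 4 * N + 5 * M + 2 := by
    have c0 : ({RVert.sink, RVert.dummy 0} : Finset (RVert N M L)).card ≤ 2 :=
      (Finset.card_insert_le _ _).trans (by simp)
    have cA : (Finset.univ.image (RVert.a (N := N) (M := M) (L := L))).card ≤ N :=
      Finset.card_image_le.trans (by simp)
    have cUT : (Finset.univ.image (RVert.uT (N := N) (M := M) (L := L))).card ≤ N :=
      Finset.card_image_le.trans (by simp)
    have cUF : (Finset.univ.image (RVert.uF (N := N) (M := M) (L := L))).card ≤ N :=
      Finset.card_image_le.trans (by simp)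
    have cB : (Finset.univ.image (RVert.b (N := N) (M := M) (L := L))).card ≤ N :=
      Finset.card_image_le.trans (by simp)
    have cS : (Finset.univ.image (RVert.s (N := N) (M := M) (L := L))).card ≤ M :=
      Finset.card_image_le.trans (by simp)
    have cQ : (Finset.univ.image (fun x : Fin 3 × Fin M => (RVert.q x.1 x.2 : RVert N M L))).card
        ≤ 3 * M := Finset.card_image_le.trans (by simp)
    have cT : (Finset.univ.image (RVert.t (N := N) (M := M) (L := L))).card ≤ M :=
      Finset.card_image_le.trans (by simp)
    calc S.card ≤ 2 + N + N + N + N + M + 3 * M + M := by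
          rw [hS]
          refine (Finset.card_union_le _ _).trans (Nat.add_le_add ?_ cT)
          refine (Finset.card_union_le _ _).trans (Nat.add_le_add ?_ cQ)
          refine (Finset.card_union_le _ _).trans (Nat.add_le_add ?_ cS)
          refine (Finset.card_union_le _ _).trans (Nat.add_le_add ?_ cB)
          refine (Finset.card_union_le _ _).trans (Nat.add_le_add ?_ cUF)
          refine (Finset.card_union_le _ _).trans (Nat.add_le_add ?_ cUT)
          exact (Finset.card_union_le _ _).trans (Nat.add_le_add c0 cA)
      _ = 4 * N + 5 * M + 2 := by ring
  calc (vertsOf RVert.sink T).ncard ≤ (↑S : Set (RVert N M L)).ncard :=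
        Set.ncard_le_ncard hsubS S.finite_toSet
    _ = S.card := Set.ncard_coe_finset S
    _ ≤ 4 * N + 5 * M + 2 := hScard
end

section
/- In every stable in-arborescence T rooted at r in the network G(φ,L) that contains all four nodes a_i, u^T_i, u^F_i, b_i of a Variable-Gadget H(x_i), T contains exactly one of the two arc sets {(u^T_i,b_i), (u^F_i,a_i), (a_i,u^T_i)} and {(u^F_i,b_i), (u^T_i,a_i), (a_i,u^F_i)}. -/
section Aux

variable {V : Type}

lemma path_step {A : V → V → Prop} {p : List V} {v s : V}
    (h : IsPath A p v s) (hvs : v ≠ s) :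
    ∃ w q, p = v :: q ∧ IsPath A q w s ∧ A v w ∧ v ∉ q := by
  obtain ⟨h1, h2, h3, h4⟩ := h
  match p with
  | [] => simp at h1
  | [x] =>
      simp only [List.head?_cons, Option.some.injEq] at h1
      simp only [List.getLast?_singleton, Option.some.injEq] at h2
      exact absurd (h1.symm.trans h2) hvs
  | x :: y :: q' =>
      have hx : x = v := by simpa using h1
      subst hx
      rw [List.getLast?_cons_cons] at h2
      simp only [List.Chain', List.isChain_cons_cons] at h3
      rw [List.nodup_cons] at h4
      exact ⟨y, y :: q', rfl, ⟨rfl, h2, h3.2, h4.2⟩, h3.1, h4.1⟩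

lemma path_cons_s7 {A : V → V → Prop} {p : List V} {w s : V} (v : V)
    (hA : A v w) (h : IsPath A p w s) (hv : v ∉ p) : IsPath A (v :: p) v s := by
  obtain ⟨h1, h2, h3, h4⟩ := h
  refine ⟨rfl, ?_, ?_, ?_⟩
  · match p with
    | [] => simp at h1
    | x :: q => rw [List.getLast?_cons_cons]; exact h2
  · simp only [List.Chain', List.isChain_cons]
    refine ⟨?_, h3⟩
    intro y hy
    rw [h1] at hy
    cases hy
    exact hA
  · exact List.nodup_cons.2 ⟨hv, h4⟩

lemma head_mem_path {A : V → V → Prop} {p : List V} {v s : V} (h : IsPath A p v s) :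
    v ∈ p := by
  match p with
  | [] => simpa [IsPath] using h.1
  | x :: q =>
      have hx : x = v := by simpa using h.1
      exact hx ▸ List.mem_cons_self (a := x) (l := q)

lemma verts_of_path {T : Set (V × V)} {r : V} {p : List V} {v : V}
    (h : IsPath (arcRel T) p v r) : v ∈ vertsOf r T := by
  by_cases hv : v = r
  · exact Set.mem_insert_iff.2 (Or.inl hv)
  · obtain ⟨w, q, -, -, hvw, -⟩ := path_step h hv
    exact Set.mem_insert_iff.2 (Or.inr ⟨(v, w), hvw, Or.inl rfl⟩)

lemma path_eq {T : Set (V × V)} {r : V} (harb : IsInArb r T) {p q : List V} {v : V}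
    (hp : IsPath (arcRel T) p v r) (hq : IsPath (arcRel T) q v r) : p = q := by
  obtain ⟨p0, -, hun⟩ := harb v (verts_of_path hp)
  rw [hun p hp, hun q hq]

lemma stab_avoid {adj : V → V → Prop} {pref : V → V → V → Prop} {D : V → Set V} {r : V}
    {T : Set (V × V)} (harb : IsInArb r T) (hstab : StableArb adj pref D r T)
    {u w : V} (huw : (u, w) ∈ T) {p : List V} (hp : IsPath (arcRel T) p w r) :
    ∀ x ∈ D u, x ∉ p := by
  obtain ⟨⟨-, q, hq, havoid⟩, -⟩ := hstab (u, w) huw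
  have hpq : p = q := path_eq harb hp hq
  intro x hx
  rw [hpq]
  exact havoid x hx

end Aux

lemma key_gadget {N M L : ℕ} (C : Fin M → Fin 3 → Fin N × Bool) (i : Fin N)
    {u1 u2 : RVert N M L} (hne : u1 ≠ u2) (hs1 : u1 ≠ .sink) (hs2 : u2 ≠ .sink)
    (ha2 : u2 ≠ .a i)
    (h1 : outList N M L u1 = [.a i, .b i])
    (h2 : outList N M L u2 = [.a i, .b i])
    (hf2 : filtR C u2 = {u2})
    (hfa : filtR C (RVert.a i : RVert N M L) = {RVert.a i})
    {T : Set (RVert N M L × RVert N M L)}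
    (hsub : ∀ e ∈ T, adjR e.1 e.2)
    (harb : IsInArb RVert.sink T)
    (hstab : StableArb adjR prefR (filtR C) RVert.sink T)
    (hu2v : u2 ∈ vertsOf RVert.sink T)
    (hau1 : (RVert.a i, u1) ∈ T) :
    (u1, RVert.b i) ∈ T ∧ (u2, RVert.a i) ∈ T ∧ (RVert.a i, u2) ∉ T := by
  have hu1v : u1 ∈ vertsOf RVert.sink T :=
    Set.mem_insert_iff.2 (Or.inr ⟨_, hau1, Or.inr rfl⟩)
  obtain ⟨p1, hp1, -⟩ := harb u1 hu1v
  obtain ⟨w1, q1, hp1e, hq1, hw1T, -⟩ := path_step hp1 hs1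
  have hw1adj : adjR u1 w1 := hsub (u1, w1) hw1T
  unfold adjR at hw1adj
  rw [h1] at hw1adj
  have hanp1 : RVert.a i ∉ p1 :=
    stab_avoid harb hstab hau1 hp1 _ (by rw [hfa]; rfl)
  have hw1b : w1 = RVert.b i := by
    rcases List.mem_cons.1 hw1adj with h | h
    · exfalso
      apply hanp1
      rw [hp1e]
      exact List.mem_cons_of_mem _ (h ▸ head_mem_path hq1)
    · simpa using h
  subst hw1b
  have hpa : IsPath (arcRel T) (RVert.a i :: p1) (RVert.a i) RVert.sink :=
    path_cons_s7 _ hau1 hp1 hanp1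
  refine ⟨hw1T, ?_, ?_⟩
  · -- (u2, a i) ∈ T
    obtain ⟨p2, hp2, -⟩ := harb u2 hu2v
    obtain ⟨w2, q2, hp2e, hq2, hw2T, -⟩ := path_step hp2 hs2
    have hw2adj : adjR u2 w2 := hsub (u2, w2) hw2T
    unfold adjR at hw2adj
    rw [h2] at hw2adj
    rcases List.mem_cons.1 hw2adj with h | h
    · exact h ▸ hw2T
    · have hw2b : w2 = RVert.b i := by simpa using h
      subst hw2b
      exfalso
      have hu2q1 : u2 ∉ q1 := stab_avoid harb hstab hw2T hq1 u2 (by rw [hf2]; rfl)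
      have hu2pa : u2 ∉ RVert.a i :: p1 := by
        rw [hp1e]
        intro hmem
        simp only [List.mem_cons] at hmem
        rcases hmem with h' | h' | h'
        · exact ha2 h'
        · exact hne h'.symm
        · exact hu2q1 h'
      have hvalid : ValidFor adjR (filtR C) RVert.sink T u2 (RVert.a i) := by
        refine ⟨?_, RVert.a i :: p1, hpa, ?_⟩
        · unfold adjR; rw [h2]; exact List.mem_cons_self
        · intro x hx
          rw [hf2, Set.mem_singleton_iff] at hx
          subst hx
          exact hu2pa
      obtain ⟨-, hpref⟩ := hstab (u2, RVert.b i) hw2T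
      have hab : (RVert.a i : RVert N M L) ≠ RVert.b i := fun h' => by cases h'
      obtain ⟨-, -, hlt⟩ := hpref (RVert.a i) hvalid hab
      rw [h2] at hlt
      have hlt' : List.idxOf (RVert.b i) [RVert.a i, RVert.b i] <
          List.idxOf (RVert.a i) [RVert.a i, RVert.b i] := hlt
      rw [List.idxOf_cons_self] at hlt'
      rw [List.idxOf_cons_ne _ hab] at hlt'
      omega
  · -- (a i, u2) ∉ T
    intro hau2
    obtain ⟨p2, hp2, -⟩ := harb u2 hu2v
    have ha2np : RVert.a i ∉ p2 :=
      stab_avoid harb hstab hau2 hp2 _ (by rw [hfa]; rfl)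
    have hpa2 : IsPath (arcRel T) (RVert.a i :: p2) (RVert.a i) RVert.sink :=
      path_cons_s7 _ hau2 hp2 ha2np
    have heq : RVert.a i :: p1 = RVert.a i :: p2 := path_eq harb hpa hpa2
    have hp12 : p1 = p2 := by simpa using heq
    apply hne
    have h1h : p1.head? = some u1 := hp1.1
    rw [hp12, hp2.1] at h1h
    exact (Option.some.inj h1h).symm

/-- every stable in-arborescence `T` rooted at `r` in `G(φ,L)` containing
all four nodes `aᵢ, u^Tᵢ, u^Fᵢ, bᵢ` of the Variable-Gadget `H(xᵢ)` contains exactly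
one of the two arc sets `{(u^Tᵢ,bᵢ), (u^Fᵢ,aᵢ), (aᵢ,u^Tᵢ)}` and
`{(u^Fᵢ,bᵢ), (u^Tᵢ,aᵢ), (aᵢ,u^Fᵢ)}`. -/
theorem stmt7 (N M L : ℕ) (hN : 0 < N) (hM : 0 < M) (hL : 1 ≤ L)
    (C : Fin M → Fin 3 → Fin N × Bool) (i : Fin N)
    (T : Set (RVert N M L × RVert N M L))
    (hsub : ∀ e ∈ T, adjR e.1 e.2)
    (harb : IsInArb RVert.sink T)
    (hstab : StableArb adjR prefR (filtR C) RVert.sink T)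
    (ha : RVert.a i ∈ vertsOf RVert.sink T)
    (huT : RVert.uT i ∈ vertsOf RVert.sink T)
    (huF : RVert.uF i ∈ vertsOf RVert.sink T)
    (hb : RVert.b i ∈ vertsOf RVert.sink T) :
    Xor'
      (({(RVert.uT i, RVert.b i), (RVert.uF i, RVert.a i), (RVert.a i, RVert.uT i)} :
          Set (RVert N M L × RVert N M L)) ⊆ T)
      (({(RVert.uF i, RVert.b i), (RVert.uT i, RVert.a i), (RVert.a i, RVert.uF i)} :
          Set (RVert N M L × RVert N M L)) ⊆ T) := by
  obtain ⟨pa, hpa, -⟩ := harb _ ha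
  have has : (RVert.a i : RVert N M L) ≠ RVert.sink := fun h => by cases h
  obtain ⟨α, qa, hpae, hqa, hαT, -⟩ := path_step hpa has
  have hαadj : adjR (RVert.a i) α := hsub (RVert.a i, α) hαT
  unfold adjR at hαadj
  rw [show outList N M L (RVert.a i) = [RVert.uT i, RVert.uF i] from rfl] at hαadj
  rcases List.mem_cons.1 hαadj with h | h
  · -- α = uT i
    have hT : (RVert.a i, RVert.uT i) ∈ T := h ▸ hαT
    obtain ⟨k1, k2, k3⟩ := key_gadget C i
      (u1 := RVert.uT i) (u2 := RVert.uF i)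
      (fun h' => by cases h') (fun h' => by cases h')
      (fun h' => by cases h') (fun h' => by cases h')
      rfl rfl rfl rfl hsub harb hstab huF hT
    refine Or.inl ⟨?_, ?_⟩
    · intro e he
      simp only [Set.mem_insert_iff, Set.mem_singleton_iff] at he
      rcases he with rfl | rfl | rfl
      exacts [k1, k2, hT]
    · intro hsub2
      exact k3 (hsub2 (Set.mem_insert_iff.2 (Or.inr
        (Set.mem_insert_iff.2 (Or.inr rfl)))))
  · -- α = uF i
    have hα : α = RVert.uF i := by simpa using h
    have hT : (RVert.a i, RVert.uF i) ∈ T := hα ▸ hαT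
    obtain ⟨k1, k2, k3⟩ := key_gadget C i
      (u1 := RVert.uF i) (u2 := RVert.uT i)
      (fun h' => by cases h') (fun h' => by cases h')
      (fun h' => by cases h') (fun h' => by cases h')
      rfl rfl rfl rfl hsub harb hstab huT hT
    refine Or.inr ⟨?_, ?_⟩
    · intro e he
      simp only [Set.mem_insert_iff, Set.mem_singleton_iff] at he
      rcases he with rfl | rfl | rfl
      exacts [k1, k2, hT]
    · intro hsub1
      exact k3 (hsub1 (Set.mem_insert_iff.2 (Or.inr
        (Set.mem_insert_iff.2 (Or.inr rfl)))))
end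

section
/- (Union Lemma) Let S be a spanning in-arborescence rooted at r in a network. If S is strongly stable on a set A ⊆ V∖{r} and also strongly stable on a set B ⊆ V∖{r}, then S is strongly stable on A ∪ B. -/
/-- A network: a finite digraph with a sink `r` having no outgoing arcs, in which every
node has a directed path to `r`, together with a strict linear preference order
(`pref v w w'` : `v` strictly prefers `w` to `w'`) on the out-neighbours of each node. -/
structure Network (V : Type) where
  adj : V → V → Prop
  r : V
  sink_no_out : ∀ w, ¬ adj r w
  reach : ∀ v, ∃ p, IsPath adj p v r
  pref : V → V → V → Prop
  pref_adj : ∀ v w w', pref v w w' → adj v w ∧ adj v w'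
  pref_irrefl : ∀ v w, ¬ pref v w w
  pref_trans : ∀ v, Transitive (pref v)
  pref_total : ∀ v w w', adj v w → adj v w' → w ≠ w' → pref v w w' ∨ pref v w' w

/-- `S` is a spanning in-arborescence rooted at `r`: every node of `V` has a unique
directed path in `S` to `r`. -/
def IsSpanningArb {V : Type} (r : V) (S : Set (V × V)) : Prop :=
  ∀ v : V, ∃! p : List V, IsPath (arcRel S) p v r

/-- The vertex set of the `Q`-subtree of `v` in `S`, i.e. of the maximal subtree
rooted at `v` of the forest `S[Q]` (the arcs of `S` with both endpoints in `Q`). -/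
def Subtree {V : Type} (S : Set (V × V)) (Q : Set V) (v : V) : Set V :=
  {u | Relation.ReflTransGen (fun a b => (a, b) ∈ S ∧ a ∈ Q ∧ b ∈ Q) u v}

/-- `S` is strongly stable on `O`: every node `v ∈ O` prefers its parent in `S` to
every other out-neighbour of `v` lying outside the `O`-subtree of `v` in `S`. -/
def StronglyStable {V : Type} (N : Network V) (S : Set (V × V)) (O : Set V) : Prop :=
  ∀ v ∈ O, ∀ w, (v, w) ∈ S →
    ∀ w', N.adj v w' → w' ≠ w → w' ∉ Subtree S O v → N.pref v w w'

/-- The set of arcs of `S` whose tail lies in `U` (denoted `𝒜⁺_S(U)`). -/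
def arcsFrom {V : Type} (S : Set (V × V)) (U : Set V) : Set (V × V) :=
  {e ∈ S | e.1 ∈ U}

/-- `S` is a skeleton of `T` with respect to `O`: for every maximal subtree `F` of the
forest `S[O]` (identified by its root `ρ`, a node of `O` whose parent in `S` is not
in `O`), either `𝒜⁺_S(V(F)) ⊆ T` or `V(F) ∩ V(T) = ∅`. -/
def IsSkeleton {V : Type} (r : V) (S T : Set (V × V)) (O : Set V) : Prop :=
  ∀ ρ ∈ O, (∀ w, (ρ, w) ∈ S → w ∉ O) →
    (arcsFrom S (Subtree S O ρ) ⊆ T) ∨ (∀ u ∈ Subtree S O ρ, u ∉ vertsOf r T)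

/-- Union Lemma: if a spanning in-arborescence `S` rooted at `r` in a
network is strongly stable on `A ⊆ V \ {r}` and on `B ⊆ V \ {r}`, then it is strongly
stable on `A ∪ B`. -/
theorem stmt8 {V : Type} [Fintype V] (N : Network V) (S : Set (V × V))
    (hS : ∀ e ∈ S, N.adj e.1 e.2) (hspan : IsSpanningArb N.r S)
    (A B : Set V) (hA : ∀ v ∈ A, v ≠ N.r) (hB : ∀ v ∈ B, v ≠ N.r)
    (hSA : StronglyStable N S A) (hSB : StronglyStable N S B) :
    StronglyStable N S (A ∪ B) := by
  have mono : ∀ (Q : Set V), Q ⊆ A ∪ B → ∀ v, Subtree S Q v ⊆ Subtree S (A ∪ B) v := by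
    intro Q hQ v u hu
    exact Relation.ReflTransGen.mono (p := fun a b => (a, b) ∈ S ∧ a ∈ A ∪ B ∧ b ∈ A ∪ B) (fun a b h => ⟨h.1, hQ h.2.1, hQ h.2.2⟩) _ _ hu
  intro v hv w hw w' hadj hne hout
  rcases hv with hvA | hvB
  · exact hSA v hvA w hw w' hadj hne
      (fun h => hout (mono A Set.subset_union_left v h))
  · exact hSB v hvB w hw w' hadj hne
      (fun h => hout (mono B Set.subset_union_right v h))
end

section
/- Let V be a finite vertex set with r ∈ V, let R be a directed graph on V without self-loops in which r has no outgoing arc and every other vertex has exactly one outgoing arc, let S be a spanning in-arborescence rooted at r, and let 𝕆 ⊆ V∖{r} be such that every vertex of 𝕆 has the same outgoing arc in R as in S. For w ∈ 𝕆, let z(w) denote the first vertex not in 𝕆 reached by following arcs of S starting from w (well-defined since r ∉ 𝕆). Suppose that for every arc (v,w) of R with v ∉ 𝕆 and w ∈ 𝕆 we have v ≠ z(w). Then every directed cycle of R contains at least two distinct vertices not in 𝕆. -/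
/-- `z` is the first vertex not in `O` reached by following arcs of `S` starting
from `w`: there is a directed walk in `S` from `w` to `z` all of whose vertices
except the last lie in `O`, with `z ∉ O`. -/
def FirstExit {V : Type} (S : Set (V × V)) (O : Set V) (w z : V) : Prop :=
  ∃ p : List V, p.Chain' (arcRel S) ∧ p.head? = some w ∧ p.getLast? = some z ∧
    z ∉ O ∧ ∀ x ∈ p.dropLast, x ∈ O

/-- Auxiliary: propagate a predicate along a chain. -/
lemma chainAll' {α : Type} {A : α → α → Prop} {P : α → Prop}
    (hP : ∀ a b, P a → A a b → P b) :
    ∀ q : List α, q.Chain' A → (∀ x ∈ q.head?, P x) → ∀ z ∈ q, P z := by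
  intro q
  induction q with
  | nil => simp
  | cons a t ih =>
    intro hc hh z hz
    rw [List.Chain', List.isChain_cons] at hc
    have hPa : P a := hh a rfl
    rcases List.mem_cons.mp hz with rfl | hz
    · exact hPa
    · exact ih hc.2 (fun x hx => hP a x hPa (hc.1 x hx)) z hz

/-- Auxiliary: change the relation of a chain using membership in the dropLast. -/
lemma chainImp' {α : Type} {A B : α → α → Prop} :
    ∀ q : List α, q.Chain' A → (∀ a b, a ∈ q.dropLast → A a b → B a b) → q.Chain' B := by
  intro q
  induction q with
  | nil => simp [List.Chain']
  | cons a t ih =>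
    intro hc h
    cases t with
    | nil => simp [List.Chain']
    | cons b t' =>
      rw [List.Chain', List.isChain_cons_cons] at hc ⊢
      refine ⟨h a b (by simp) hc.1, ih hc.2 ?_⟩
      intro x y hx hxy
      exact h x y (by simp [List.dropLast_cons₂]; right; exact hx) hxy

/-- let `R` (given by `next`) be a digraph on a finite vertex set `V`
without self-loops in which `r` has no outgoing arc and every other vertex has exactly
one outgoing arc, let `S` be a spanning in-arborescence rooted at `r`, and let
`O ⊆ V \ {r}` be such that every vertex of `O` has the same outgoing arc in `R` as in
`S`.  If for every arc `(v,w)` of `R` with `v ∉ O` and `w ∈ O` the vertex `v` differs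
from `z(w)`, the first vertex outside `O` reached from `w` along `S`, then every
directed cycle of `R` contains at least two distinct vertices not in `O`. -/
theorem stmt12 {V : Type} [Fintype V] (r : V) (next : V → Option V)
    (hr : next r = none) (hloop : ∀ v, next v ≠ some v)
    (hout : ∀ v, v ≠ r → (next v).isSome)
    (S : Set (V × V)) (hS : IsSpanningArb r S)
    (O : Set V) (hOr : r ∉ O)
    (hagree : ∀ v ∈ O, ∀ w, next v = some w ↔ (v, w) ∈ S)
    (hz : ∀ v w z, v ∉ O → next v = some w → w ∈ O → FirstExit S O w z → v ≠ z)
    (l : List V) (hl : l ≠ []) (hnd : l.Nodup)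
    (hchain : l.Chain' (fun a b => next a = some b))
    (hwrap : ∀ x ∈ l.getLast?, ∀ y ∈ l.head?, next x = some y) :
    ∃ u v, u ∈ l ∧ v ∈ l ∧ u ≠ v ∧ u ∉ O ∧ v ∉ O := by
  -- every vertex of the cycle has its `next` inside the cycle
  have hcyc : ∀ x ∈ l, ∃ y ∈ l, next x = some y := by
    intro x hx
    obtain ⟨l₁, l₂, rfl⟩ := List.append_of_mem hx
    cases l₂ with
    | nil =>
      cases hy : (l₁ ++ [x]).head? with
      | none => simp at hy
      | some y =>
        refine ⟨y, List.mem_of_mem_head? (by rw [Option.mem_def, hy]), ?_⟩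
        exact hwrap x (by rw [Option.mem_def, List.getLast?_concat]) y
          (by rw [Option.mem_def, hy])
    | cons c t =>
      have h1 := (List.isChain_append.mp hchain).2.1
      have h2 := (List.isChain_cons.mp h1).1 c rfl
      exact ⟨c, by simp, h2⟩
  by_cases hall : ∀ x ∈ l, x ∈ O
  · exfalso
    obtain ⟨p, hp, -⟩ := hS (l.head hl)
    obtain ⟨hph, hpl, hpc, -⟩ := hp
    have hmem : ∀ z ∈ p, z ∈ l := by
      refine chainAll' ?_ p hpc ?_
      · intro a b ha hab
        obtain ⟨y, hyl, hy⟩ := hcyc a ha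
        have hb : next a = some b := (hagree a (hall a ha) b).mpr hab
        rw [hb] at hy
        exact (Option.some_inj.mp hy) ▸ hyl
      · intro x hx
        rw [Option.mem_def, hph, Option.some_inj] at hx
        exact hx ▸ List.head_mem hl
    have hrl : r ∈ l := hmem r (List.mem_of_mem_getLast? (by rw [Option.mem_def, hpl]))
    exact hOr (hall r hrl)
  push_neg at hall
  obtain ⟨v, hvl, hvO⟩ := hall
  by_cases h2 : ∃ u ∈ l, u ∉ O ∧ u ≠ v
  · obtain ⟨u, hul, huO, huv⟩ := h2
    exact ⟨u, v, hul, hvl, huv, huO, hvO⟩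
  exfalso
  push_neg at h2
  have huniq : ∀ u ∈ l, u ∉ O → u = v := h2
  obtain ⟨w, hwl, hvw⟩ := hcyc v hvl
  have hwv : w ≠ v := fun h => hloop v (h ▸ hvw)
  have hwO : w ∈ O := by
    by_contra h
    exact hwv (huniq w hwl h)
  obtain ⟨l₁, l₂, rfl⟩ := List.append_of_mem hvl
  have hv1 : v ∉ l₁ := fun h => (List.nodup_append'.mp hnd).2.2 h List.mem_cons_self
  have hv2 : v ∉ l₂ := (List.nodup_cons.mp (List.nodup_append.mp hnd).2.1).1
  obtain ⟨hc1, hcv2, hlink⟩ := List.isChain_append.mp hchain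
  obtain ⟨hvhead, hc2⟩ := List.isChain_cons.mp hcv2
  have hlink1 : ∀ x ∈ l₁.getLast?, next x = some v := fun x hx => hlink x hx v rfl
  have hlink2 : ∀ x ∈ l₂.getLast?, ∀ y ∈ l₁.head?, next x = some y := by
    intro x hx y hy
    rw [Option.mem_def] at hx hy
    apply hwrap
    · rw [Option.mem_def, List.getLast?_append,
        show (v :: l₂) = [v] ++ l₂ from rfl, List.getLast?_append, hx]
      rfl
    · rw [Option.mem_def, List.head?_append, hy]
      rfl
  -- the rotated cycle, as a chain of `next`
  have hq : ((l₂ ++ l₁) ++ [v]).Chain' (fun a b => next a = some b) := by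
    rw [List.Chain', List.isChain_append]
    refine ⟨List.isChain_append.mpr ⟨hc2, hc1, hlink2⟩, List.isChain_singleton v, ?_⟩
    intro x hx y hy
    have hyv : y = v := by
      rw [Option.mem_def] at hy
      exact Option.some_inj.mp hy.symm
    rw [hyv]
    rw [Option.mem_def, List.getLast?_append] at hx
    cases h1 : l₁.getLast? with
    | some a =>
      rw [h1] at hx
      simp at hx
      exact hlink1 x (by rw [Option.mem_def, h1, hx])
    | none =>
      rw [h1, Option.none_or] at hx
      have hl1 : l₁ = [] := List.getLast?_eq_none_iff.mp h1
      subst hl1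
      apply hwrap
      · rw [Option.mem_def, List.nil_append,
          show (v :: l₂) = [v] ++ l₂ from rfl, List.getLast?_append, hx]
        rfl
      · rw [Option.mem_def, List.nil_append, List.head?_cons]
  -- the head of the rotated cycle is `w`
  have hqhead : ((l₂ ++ l₁) ++ [v]).head? = some w := by
    cases l₂ with
    | cons c t =>
      have hc : next v = some c := hvhead c rfl
      rw [hvw, Option.some_inj] at hc
      simp [hc]
    | nil =>
      cases l₁ with
      | nil =>
        exact absurd (hwrap v (by simp) v (by simp)) (hloop v)
      | cons c t =>
        have hc : next v = some c :=
          hwrap v (by rw [Option.mem_def,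
              show c :: t ++ [v] = (c :: t) ++ [v] from rfl, List.getLast?_concat])
            c (by rw [Option.mem_def]; rfl)
        rw [hvw, Option.some_inj] at hc
        simp [hc]
  -- everything in the rotated cycle except the final `v` lies in `O`
  have hmemO : ∀ x ∈ l₂ ++ l₁, x ∈ O := by
    intro x hx
    have hxl : x ∈ l₁ ++ v :: l₂ := by
      rcases List.mem_append.mp hx with h | h
      · exact List.mem_append.mpr (Or.inr (List.mem_cons_of_mem v h))
      · exact List.mem_append.mpr (Or.inl h)
    have hxv : x ≠ v := by
      rintro rfl
      rcases List.mem_append.mp hx with h | h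
      · exact hv2 h
      · exact hv1 h
    by_contra hxO
    exact hxv (huniq x hxl hxO)
  -- convert to a chain in `S`
  have hqS : ((l₂ ++ l₁) ++ [v]).Chain' (arcRel S) := by
    refine chainImp' _ hq ?_
    intro a b ha hab
    rw [List.dropLast_concat] at ha
    exact (hagree a (hmemO a ha) b).mp hab
  have hfe : FirstExit S O w v :=
    ⟨(l₂ ++ l₁) ++ [v], hqS, hqhead, List.getLast?_concat, hvO,
      by rw [List.dropLast_concat]; exact hmemO⟩
  exact hz v w v hvO hvw hwO hfe rfl
end
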